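/- Let a ≥ 2 be an integer and k = ⌈√a⌉. For every positive integer n, there exists a family of kn² distinct finite sets such that every a-union-free subfamily has size at most a + 4kn. -/

import Mathlib

open Finset

def TTaux (b n x y : ℕ) : Finset ℕ :=
  Finset.range (b + x + 1) ∪ (Finset.range (y + 1)).image (fun z => b + n + z)

lemma mem_TTaux {b n x y m : ℕ} :
    m ∈ TTaux b n x y ↔ m < b + x + 1 ∨ (b + n ≤ m ∧ m < b + n + y + 1) := by
  simp only [TTaux, Finset.mem_union, Finset.mem_range, Finset.mem_image]
  constructor
  · rintro (h | ⟨z, hz, rfl⟩)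
    · exact Or.inl h
    · right; omega
  · rintro (h | h)
    · exact Or.inl h
    · exact Or.inr ⟨m - (b + n), by omega, by omega⟩

lemma TTaux_union {b n x y x' y' : ℕ} (hx : x' ≤ x) (hy : y' ≤ y) :
    TTaux b n x y' ∪ TTaux b n x' y = TTaux b n x y := by
  ext m
  simp only [Finset.mem_union, mem_TTaux]
  omega

lemma TTaux_mono_same {b n x y x' y' : ℕ} (hx : x ≤ x') (hy : y ≤ y') :
    TTaux b n x y ⊆ TTaux b n x' y' := by
  intro m hm
  rw [mem_TTaux] at hm ⊢
  omega

lemma TTaux_mono_level {b b' n x y x' y' : ℕ} (hx : x < n) (hy : y < n)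
    (hb : b + 2 * n ≤ b') : TTaux b n x y ⊆ TTaux b' n x' y' := by
  intro m hm
  rw [mem_TTaux] at hm ⊢
  omega

lemma TTaux_inj {b b' n x y x' y' : ℕ} (hx : x < n) (hy : y < n) (hx' : x' < n)
    (hy' : y' < n) (hbb : b = b' ∨ b + 2 * n ≤ b' ∨ b' + 2 * n ≤ b)
    (h : TTaux b n x y = TTaux b' n x' y') : b = b' ∧ x = x' ∧ y = y' := by
  have hext : ∀ m, m ∈ TTaux b n x y ↔ m ∈ TTaux b' n x' y' := fun m => by rw [h]
  simp only [mem_TTaux] at hext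
  have hb : b = b' := by
    rcases hbb with h1 | h1 | h1
    · exact h1
    · have := (hext (b' + n)).mpr (by omega)
      omega
    · have := (hext (b + n)).mp (by omega)
      omega
  subst hb
  have h1 := (hext (b + x)).mp (by omega)
  have h2 := (hext (b + x')).mpr (by omega)
  have h3 := (hext (b + n + y)).mp (by omega)
  have h4 := (hext (b + n + y')).mpr (by omega)
  omega


open scoped Classical in
lemma sweep_lemma {n k a : ℕ} (hk : 1 ≤ k) (hak : a ≤ k * k) (Q : Finset (ℕ × ℕ))
    (hQb : ∀ q ∈ Q, q.1 < n ∧ q.2 < n)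
    (hQA : ∀ p ∈ Q, (Q.filter (fun q => q.1 ≤ p.1 ∧ q.2 ≤ p.2)).card ≤ a) :
    Q.card ≤ 2 * (k * n) := by
  set δ : ℕ × ℕ → ℕ := fun q =>
    ((Finset.range n).filter (fun y => q.2 < y ∧ ∃ p ∈ Q, p.2 = y ∧ q.1 ≤ p.1)).card with hδ
  set ρ : ℕ × ℕ → ℕ := fun q =>
    ((Finset.range n).filter (fun y => q.2 ≤ y ∧ ∃ p ∈ Q, p.2 = y ∧ q.1 ≤ p.1)).card with hρ
  -- 1 + δ q ≤ ρ q for q ∈ Q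
  have h1 : ∀ q ∈ Q, 1 + δ q ≤ ρ q := by
    intro q hq
    have hsub : insert q.2
        ((Finset.range n).filter (fun y => q.2 < y ∧ ∃ p ∈ Q, p.2 = y ∧ q.1 ≤ p.1)) ⊆
        ((Finset.range n).filter (fun y => q.2 ≤ y ∧ ∃ p ∈ Q, p.2 = y ∧ q.1 ≤ p.1)) := by
      intro y hy
      rcases Finset.mem_insert.mp hy with rfl | hy
      · exact Finset.mem_filter.mpr ⟨Finset.mem_range.mpr (hQb q hq).2,
          le_refl _, q, hq, rfl, le_refl _⟩
      · rcases Finset.mem_filter.mp hy with ⟨hy1, hy2, hy3⟩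
        exact Finset.mem_filter.mpr ⟨hy1, le_of_lt hy2, hy3⟩
    have hnm : q.2 ∉ (Finset.range n).filter
        (fun y => q.2 < y ∧ ∃ p ∈ Q, p.2 = y ∧ q.1 ≤ p.1) := by
      intro hmem
      exact absurd (Finset.mem_filter.mp hmem).2.1 (lt_irrefl _)
    have hcard := Finset.card_le_card hsub
    rw [Finset.card_insert_of_notMem hnm] at hcard
    simp only [hδ, hρ]
    omega
  -- row counting : ∑ ρ ≤ a * n
  have h2 : ∑ q ∈ Q, ρ q ≤ a * n := by
    have hrow : ∀ y, (Q.filter (fun q => q.2 ≤ y ∧ ∃ p ∈ Q, p.2 = y ∧ q.1 ≤ p.1)).card ≤ a := by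
      intro y
      rcases Finset.eq_empty_or_nonempty
        (Q.filter (fun q => q.2 ≤ y ∧ ∃ p ∈ Q, p.2 = y ∧ q.1 ≤ p.1)) with he | hne
      · rw [he]; simp
      · obtain ⟨q0, hq0⟩ := hne
        rcases Finset.mem_filter.mp hq0 with ⟨hq0Q, hq0y, p', hp'Q, hp'2, hp'1⟩
        have hSy : (Q.filter (fun p => p.2 = y)).Nonempty :=
          ⟨p', Finset.mem_filter.mpr ⟨hp'Q, hp'2⟩⟩
        obtain ⟨p₀, hp₀mem, hp₀max⟩ := Finset.exists_max_image _ (fun p => p.1) hSy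
        rcases Finset.mem_filter.mp hp₀mem with ⟨hp₀Q, hp₀2⟩
        have hsub : Q.filter (fun q => q.2 ≤ y ∧ ∃ p ∈ Q, p.2 = y ∧ q.1 ≤ p.1) ⊆
            Q.filter (fun q => q.1 ≤ p₀.1 ∧ q.2 ≤ p₀.2) := by
          intro q hq
          rcases Finset.mem_filter.mp hq with ⟨hqQ, hqy, p, hpQ, hp2, hp1⟩
          refine Finset.mem_filter.mpr ⟨hqQ, ?_, ?_⟩
          · exact le_trans hp1 (hp₀max p (Finset.mem_filter.mpr ⟨hpQ, hp2⟩))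
          · rw [hp₀2]; exact hqy
        exact le_trans (Finset.card_le_card hsub) (hQA p₀ hp₀Q)
    calc ∑ q ∈ Q, ρ q
        = ∑ q ∈ Q, ∑ y ∈ Finset.range n,
            (if q.2 ≤ y ∧ ∃ p ∈ Q, p.2 = y ∧ q.1 ≤ p.1 then 1 else 0) := by
          refine Finset.sum_congr rfl fun q _ => ?_
          simp only [hρ]
          rw [Finset.card_filter]
      _ = ∑ y ∈ Finset.range n, ∑ q ∈ Q,
            (if q.2 ≤ y ∧ ∃ p ∈ Q, p.2 = y ∧ q.1 ≤ p.1 then 1 else 0) := Finset.sum_comm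
      _ = ∑ y ∈ Finset.range n,
            (Q.filter (fun q => q.2 ≤ y ∧ ∃ p ∈ Q, p.2 = y ∧ q.1 ≤ p.1)).card := by
          refine Finset.sum_congr rfl fun y _ => ?_
          rw [Finset.card_filter]
      _ ≤ ∑ _y ∈ Finset.range n, a := Finset.sum_le_sum fun y _ => hrow y
      _ = n * a := by rw [Finset.sum_const, Finset.card_range, smul_eq_mul]
      _ = a * n := Nat.mul_comm _ _
  have h3 : ∑ q ∈ Q, (1 + δ q) ≤ a * n :=
    le_trans (Finset.sum_le_sum h1) h2
  -- monotonicity of δ within a column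
  have hmono : ∀ q ∈ Q, ∀ q' ∈ Q, q.1 = q'.1 → q.2 < q'.2 → δ q' + 1 ≤ δ q := by
    intro q hq q' hq' hx hy
    have hsub : insert q'.2
        ((Finset.range n).filter (fun y => q'.2 < y ∧ ∃ p ∈ Q, p.2 = y ∧ q'.1 ≤ p.1)) ⊆
        ((Finset.range n).filter (fun y => q.2 < y ∧ ∃ p ∈ Q, p.2 = y ∧ q.1 ≤ p.1)) := by
      intro y hy'
      rcases Finset.mem_insert.mp hy' with rfl | hy'
      · exact Finset.mem_filter.mpr ⟨Finset.mem_range.mpr (hQb q' hq').2, hy,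
          q', hq', rfl, le_of_eq hx⟩
      · rcases Finset.mem_filter.mp hy' with ⟨hy1, hy2, p, hp, hp2, hp1⟩
        exact Finset.mem_filter.mpr ⟨hy1, lt_trans hy hy2, p, hp, hp2, hx ▸ hp1⟩
    have hnm : q'.2 ∉ (Finset.range n).filter
        (fun y => q'.2 < y ∧ ∃ p ∈ Q, p.2 = y ∧ q'.1 ≤ p.1) := by
      intro hmem
      exact absurd (Finset.mem_filter.mp hmem).2.1 (lt_irrefl _)
    have hcard := Finset.card_le_card hsub
    rw [Finset.card_insert_of_notMem hnm] at hcard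
    simp only [hδ]
    omega
  -- small δ part
  have hsmall : (Q.filter (fun q => δ q < k)).card ≤ k * n := by
    have hle : (Q.filter (fun q => δ q < k)).card ≤
        ((Finset.range n) ×ˢ (Finset.range k)).card := by
      apply Finset.card_le_card_of_injOn (fun q => (q.1, δ q))
      · intro q hq
        rcases Finset.mem_filter.mp hq with ⟨hqQ, hqδ⟩
        exact Finset.mem_product.mpr ⟨Finset.mem_range.mpr (hQb q hqQ).1,
          Finset.mem_range.mpr hqδ⟩
      · intro q hq q' hq' heq
        rcases Finset.mem_filter.mp (Finset.mem_coe.mp hq) with ⟨hqQ, _⟩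
        rcases Finset.mem_filter.mp (Finset.mem_coe.mp hq') with ⟨hq'Q, _⟩
        simp only [Prod.mk.injEq] at heq
        obtain ⟨h1', h2'⟩ := heq
        rcases Nat.lt_trichotomy q.2 q'.2 with hlt | heq2 | hgt
        · have := hmono q hqQ q' hq'Q h1' hlt; omega
        · exact Prod.ext h1' heq2
        · have := hmono q' hq'Q q hqQ h1'.symm hgt; omega
    rw [Finset.card_product, Finset.card_range, Finset.card_range, Nat.mul_comm] at hle
    exact hle
  -- big δ part
  have hbig : (Q.filter (fun q => ¬ δ q < k)).card ≤ k * n := by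
    have hb1 : (Q.filter (fun q => ¬ δ q < k)).card * (k + 1) ≤ a * n := by
      calc (Q.filter (fun q => ¬ δ q < k)).card * (k + 1)
          = (Q.filter (fun q => ¬ δ q < k)).card • (k + 1) := by rw [smul_eq_mul]
        _ ≤ ∑ q ∈ Q.filter (fun q => ¬ δ q < k), (1 + δ q) := by
            apply Finset.card_nsmul_le_sum
            intro q hq
            have := (Finset.mem_filter.mp hq).2
            omega
        _ ≤ ∑ q ∈ Q, (1 + δ q) :=
            Finset.sum_le_sum_of_subset (Finset.filter_subset _ _)
        _ ≤ a * n := h3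
    have hb2 : (Q.filter (fun q => ¬ δ q < k)).card * (k + 1) ≤ (k * n) * (k + 1) := by
      apply le_trans hb1
      calc a * n ≤ (k * k) * n := Nat.mul_le_mul_right _ hak
        _ = (k * n) * k := by ring
        _ ≤ (k * n) * (k + 1) := Nat.mul_le_mul_left _ (Nat.le_succ _)
    exact Nat.le_of_mul_le_mul_right hb2 (Nat.succ_pos _)
  have hsplit := Finset.card_filter_add_card_filter_not
    (s := Q) (p := fun q => δ q < k)
  omega



/-- A family of sets is *`a`-union-free* if there are no `a+1` distinct sets
`X₁, …, X_{a+1}` in the family with `X₁ ∪ ⋯ ∪ X_a = X_{a+1}`. -/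
def AUnionFree (a : ℕ) (F : Finset (Finset ℕ)) : Prop :=
  ∀ X : Fin (a + 1) → Finset ℕ, Function.Injective X → (∀ i, X i ∈ F) →
    Finset.univ.sup (fun i : Fin a => X i.castSucc) ≠ X (Fin.last a)

/-- For `a ≥ 2`, `k = ⌈√a⌉` and every positive integer `n`, there exists a family
of `k·n²` distinct finite sets in which every `a`-union-free subfamily has size at
most `a + 4kn`. -/
theorem exists_family_small_aUnionFree (a k : ℕ) (ha : 2 ≤ a)
    (hk : k = ⌈Real.sqrt a⌉₊) (n : ℕ) (hn : 0 < n) :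
    ∃ F : Finset (Finset ℕ), F.card = k * n ^ 2 ∧
      ∀ G ⊆ F, AUnionFree a G → G.card ≤ a + 4 * k * n := by
  -- basic facts about k
  have hk1 : 1 ≤ k := by
    rw [hk]
    have h1 : (1 : ℝ) ≤ Real.sqrt a := by
      rw [show (1:ℝ) = Real.sqrt 1 by rw [Real.sqrt_one]]
      apply Real.sqrt_le_sqrt
      exact_mod_cast by omega
    have := Nat.one_le_ceil_iff.mpr (lt_of_lt_of_le (by norm_num) h1)
    omega
  have hak : a ≤ k * k := by
    have h1 : (Real.sqrt a) ≤ (k : ℝ) := by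
      rw [hk]; exact Nat.le_ceil _
    have h2 : (a : ℝ) ≤ (k : ℝ) * (k : ℝ) := by
      have h0 : (0:ℝ) ≤ Real.sqrt a := Real.sqrt_nonneg _
      calc (a : ℝ) = Real.sqrt a * Real.sqrt a := by
            rw [Real.mul_self_sqrt (by positivity)]
        _ ≤ (k : ℝ) * (k : ℝ) := mul_le_mul h1 h1 h0 (le_trans h0 h1)
    exact_mod_cast h2
  set Tv : ℕ × ℕ × ℕ → Finset ℕ := fun v => TTaux (2 * n * v.1) n v.2.1 v.2.2 with hTv
  set box : Finset (ℕ × ℕ × ℕ) :=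
    (Finset.range k) ×ˢ (Finset.range n) ×ˢ (Finset.range n) with hbox
  have hmembox : ∀ v : ℕ × ℕ × ℕ, v ∈ box ↔ v.1 < k ∧ v.2.1 < n ∧ v.2.2 < n := by
    intro v
    simp [hbox, Finset.mem_product, Finset.mem_range]
  have hbase : ∀ {i i' : ℕ}, i < i' → 2 * n * i + 2 * n ≤ 2 * n * i' := by
    intro i i' h
    have h2 : 2 * n * (i + 1) ≤ 2 * n * i' := Nat.mul_le_mul_left _ h
    calc 2 * n * i + 2 * n = 2 * n * (i + 1) := by ring
      _ ≤ 2 * n * i' := h2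
  have hTvinj : ∀ v ∈ box, ∀ w ∈ box, Tv v = Tv w → v = w := by
    intro v hv w hw h
    rw [hmembox] at hv hw
    have hbb : 2 * n * v.1 = 2 * n * w.1 ∨ 2 * n * v.1 + 2 * n ≤ 2 * n * w.1 ∨
        2 * n * w.1 + 2 * n ≤ 2 * n * v.1 := by
      rcases Nat.lt_trichotomy v.1 w.1 with h1 | h1 | h1
      · exact Or.inr (Or.inl (hbase h1))
      · exact Or.inl (by rw [h1])
      · exact Or.inr (Or.inr (hbase h1))
    obtain ⟨hb, hx, hy⟩ := TTaux_inj hv.2.1 hv.2.2 hw.2.1 hw.2.2 hbb h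
    have hn2 : 0 < 2 * n := by omega
    have hi : v.1 = w.1 := Nat.eq_of_mul_eq_mul_left hn2 hb
    exact Prod.ext hi (Prod.ext hx hy)
  refine ⟨box.image Tv, ?_, ?_⟩
  · rw [Finset.card_image_of_injOn (fun v hv w hw => hTvinj v hv w hw)]
    rw [hbox, Finset.card_product, Finset.card_product]
    simp only [Finset.card_range]
    ring
  · intro G hG hUF
    set P : Finset (ℕ × ℕ × ℕ) := box.filter (fun v => Tv v ∈ G) with hP
    have hGcard : G.card ≤ P.card := by
      have hsub : G ⊆ P.image Tv := by
        intro g hg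
        obtain ⟨v, hv, rfl⟩ := Finset.mem_image.mp (hG hg)
        exact Finset.mem_image.mpr ⟨v, Finset.mem_filter.mpr ⟨hv, hg⟩, rfl⟩
      exact le_trans (Finset.card_le_card hsub) Finset.card_image_le
    have hPbox : ∀ v ∈ P, v.1 < k ∧ v.2.1 < n ∧ v.2.2 < n := by
      intro v hv
      exact (hmembox v).mp (Finset.mem_filter.mp hv).1
    set Bset : ℕ × ℕ × ℕ → Finset (ℕ × ℕ × ℕ) := fun v =>
      P.filter (fun w => w ≠ v ∧ (w.1 < v.1 ∨
        (w.1 = v.1 ∧ w.2.1 ≤ v.2.1 ∧ w.2.2 ≤ v.2.2))) with hBset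
    -- KEY: union-freeness forces small B-sets at interior points
    have key : ∀ v ∈ P,
        (∃ w ∈ P, w.1 = v.1 ∧ w.2.1 = v.2.1 ∧ w.2.2 < v.2.2) →
        (∃ w ∈ P, w.1 = v.1 ∧ w.2.2 = v.2.2 ∧ w.2.1 < v.2.1) →
        (Bset v).card < a := by
      intro v hvP hcol hrow
      by_contra hcon
      push_neg at hcon
      obtain ⟨q₁, hq₁P, hq₁l, hq₁x, hq₁y⟩ := hcol
      obtain ⟨q₂, hq₂P, hq₂l, hq₂y, hq₂x⟩ := hrow
      have hq₁B : q₁ ∈ Bset v := by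
        refine Finset.mem_filter.mpr ⟨hq₁P, ?_, Or.inr ⟨hq₁l, le_of_eq hq₁x, le_of_lt hq₁y⟩⟩
        intro h
        rw [h] at hq₁y
        exact lt_irrefl _ hq₁y
      have hq₂B : q₂ ∈ Bset v := by
        refine Finset.mem_filter.mpr ⟨hq₂P, ?_, Or.inr ⟨hq₂l, le_of_lt hq₂x, le_of_eq hq₂y⟩⟩
        intro h
        rw [h] at hq₂x
        exact lt_irrefl _ hq₂x
      have hq₁₂ : q₁ ≠ q₂ := by
        intro h
        rw [h, hq₂y] at hq₁y
        exact lt_irrefl _ hq₁y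
      have hq₂e : q₂ ∈ (Bset v).erase q₁ := Finset.mem_erase.mpr ⟨hq₁₂.symm, hq₂B⟩
      have hEcard : a - 2 ≤ (((Bset v).erase q₁).erase q₂).card := by
        rw [Finset.card_erase_of_mem hq₂e, Finset.card_erase_of_mem hq₁B]
        omega
      obtain ⟨D, hDsub, hDcard⟩ := Finset.exists_subset_card_eq hEcard
      have hDB : D ⊆ Bset v := fun w hw =>
        Finset.mem_of_mem_erase (Finset.mem_of_mem_erase (hDsub hw))
      have hq₂D : q₂ ∉ D := fun h => (Finset.mem_erase.mp (hDsub h)).1 rfl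
      have hq₁D : q₁ ∉ insert q₂ D := by
        intro h
        rcases Finset.mem_insert.mp h with h' | h'
        · exact hq₁₂ h'
        · exact (Finset.mem_erase.mp (Finset.mem_of_mem_erase (hDsub h'))).1 rfl
      set C : Finset (ℕ × ℕ × ℕ) := insert q₁ (insert q₂ D) with hC
      have hCcard : C.card = a := by
        rw [hC, Finset.card_insert_of_notMem hq₁D, Finset.card_insert_of_notMem hq₂D,
          hDcard]
        omega
      have hCB : C ⊆ Bset v := by
        rw [hC]
        exact Finset.insert_subset hq₁B (Finset.insert_subset hq₂B hDB)
      have hCP : C ⊆ P := fun w hw => (Finset.mem_filter.mp (hCB hw)).1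
      have hvC : v ∉ C := fun h => (Finset.mem_filter.mp (hCB h)).2.1 rfl
      set g : Fin a → ℕ × ℕ × ℕ :=
        fun j => (C.equivFin.symm (Fin.cast hCcard.symm j) : C) with hg
      have hg_mem : ∀ j, g j ∈ C := fun j => (C.equivFin.symm _).2
      have hg_inj : Function.Injective g := by
        intro i j h
        have h2 : (C.equivFin.symm (Fin.cast hCcard.symm i)) =
            (C.equivFin.symm (Fin.cast hCcard.symm j)) := Subtype.ext h
        have h3 := C.equivFin.symm.injective h2
        have h4 := congrArg Fin.val h3
        simp only [Fin.coe_cast] at h4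
        exact Fin.ext h4
      have hg_surj : ∀ c, c ∈ C → ∃ j : Fin a, g j = c := by
        intro c hc
        refine ⟨Fin.cast hCcard (C.equivFin ⟨c, hc⟩), ?_⟩
        have hcast : Fin.cast hCcard.symm (Fin.cast hCcard (C.equivFin ⟨c, hc⟩)) =
            C.equivFin ⟨c, hc⟩ := by
          apply Fin.ext
          simp
        rw [hg]
        simp only [hcast, Equiv.symm_apply_apply]
      set X : Fin (a + 1) → Finset ℕ := Fin.snoc (fun j : Fin a => Tv (g j)) (Tv v) with hX
      have hlast : X (Fin.last a) = Tv v := by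
        rw [hX]
        exact Fin.snoc_last _ _
      have hcs : ∀ j : Fin a, X j.castSucc = Tv (g j) := by
        intro j
        rw [hX]
        exact Fin.snoc_castSucc _ _ _
      have hXinj : Function.Injective X := by
        intro i j hij
        rcases Fin.eq_castSucc_or_eq_last i with ⟨i', rfl⟩ | rfl <;>
          rcases Fin.eq_castSucc_or_eq_last j with ⟨j', rfl⟩ | rfl
        · rw [hcs, hcs] at hij
          have := hg_inj (hTvinj _ ((hmembox _).mpr (hPbox _ (hCP (hg_mem i'))))
            _ ((hmembox _).mpr (hPbox _ (hCP (hg_mem j')))) hij)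
          rw [this]
        · rw [hcs, hlast] at hij
          exact absurd (hg_mem i') (by
            rw [hTvinj _ ((hmembox _).mpr (hPbox _ (hCP (hg_mem i'))))
              _ ((hmembox _).mpr (hPbox _ hvP)) hij]
            exact hvC)
        · rw [hcs, hlast] at hij
          exact absurd (hg_mem j') (by
            rw [hTvinj _ ((hmembox _).mpr (hPbox _ (hCP (hg_mem j'))))
              _ ((hmembox _).mpr (hPbox _ hvP)) hij.symm]
            exact hvC)
        · rfl
      have hXG : ∀ j, X j ∈ G := by
        intro j
        rcases Fin.eq_castSucc_or_eq_last j with ⟨j', rfl⟩ | rfl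
        · rw [hcs]
          exact (Finset.mem_filter.mp (hCP (hg_mem j'))).2
        · rw [hlast]
          exact (Finset.mem_filter.mp hvP).2
      have hsup : Finset.univ.sup (fun i : Fin a => X i.castSucc) = Tv v := by
        have hrw : (fun i : Fin a => X i.castSucc) = fun i : Fin a => Tv (g i) :=
          funext hcs
        rw [hrw]
        apply le_antisymm
        · apply Finset.sup_le
          intro j _
          have hgB := hCB (hg_mem j)
          rcases Finset.mem_filter.mp hgB with ⟨hgP, hgne, hgcase⟩
          have hgbox := hPbox _ hgP
          rcases hgcase with hlt | ⟨hleq, hxle, hyle⟩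
          · exact Finset.le_iff_subset.mpr
              (TTaux_mono_level hgbox.2.1 hgbox.2.2 (hbase hlt))
          · simp only [hTv]
            rw [hleq]
            exact Finset.le_iff_subset.mpr (TTaux_mono_same hxle hyle)
        · obtain ⟨j₁, hj₁⟩ := hg_surj q₁ (by rw [hC]; exact Finset.mem_insert_self _ _)
          obtain ⟨j₂, hj₂⟩ := hg_surj q₂ (by
            rw [hC]
            exact Finset.mem_insert_of_mem (Finset.mem_insert_self _ _))
          have hu : Tv q₁ ∪ Tv q₂ = Tv v := by
            simp only [hTv]
            rw [hq₁l, hq₂l, hq₁x, hq₂y]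
            exact TTaux_union (le_of_lt hq₂x) (le_of_lt hq₁y)
          have h1 : Tv q₁ ≤ Finset.univ.sup (fun i : Fin a => Tv (g i)) := by
            rw [← hj₁]
            exact Finset.le_sup (f := fun i : Fin a => Tv (g i)) (Finset.mem_univ j₁)
          have h2 : Tv q₂ ≤ Finset.univ.sup (fun i : Fin a => Tv (g i)) := by
            rw [← hj₂]
            exact Finset.le_sup (f := fun i : Fin a => Tv (g i)) (Finset.mem_univ j₂)
          rw [← hu]
          exact Finset.le_iff_subset.mpr (Finset.union_subset
            (Finset.le_iff_subset.mp h1) (Finset.le_iff_subset.mp h2))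
      exact hUF X hXinj hXG (hsup.trans hlast.symm)
    -- counting part
    classical
    set IPred : ℕ × ℕ × ℕ → Prop := fun v =>
      (∃ w ∈ P, w.1 = v.1 ∧ w.2.1 = v.2.1 ∧ w.2.2 < v.2.2) ∧
      (∃ w ∈ P, w.1 = v.1 ∧ w.2.2 = v.2.2 ∧ w.2.1 < v.2.1) with hIPred
    have hsplit := Finset.card_filter_add_card_filter_not (s := P) (p := IPred)
    have h44 : 4 * k * n = 4 * (k * n) := by ring
    have hcolB : (P.filter (fun v =>
        ¬ ∃ w ∈ P, w.1 = v.1 ∧ w.2.1 = v.2.1 ∧ w.2.2 < v.2.2)).card ≤ k * n := by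
      have hle : (P.filter (fun v =>
          ¬ ∃ w ∈ P, w.1 = v.1 ∧ w.2.1 = v.2.1 ∧ w.2.2 < v.2.2)).card ≤
          ((Finset.range k) ×ˢ (Finset.range n)).card := by
        apply Finset.card_le_card_of_injOn (fun v => (v.1, v.2.1))
        · intro v hv
          have hb := hPbox v (Finset.mem_filter.mp hv).1
          exact Finset.mem_product.mpr ⟨Finset.mem_range.mpr hb.1,
            Finset.mem_range.mpr hb.2.1⟩
        · intro v hv w hw heq
          rcases Finset.mem_filter.mp (Finset.mem_coe.mp hv) with ⟨hvP, hvnc⟩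
          rcases Finset.mem_filter.mp (Finset.mem_coe.mp hw) with ⟨hwP, hwnc⟩
          simp only [Prod.mk.injEq] at heq
          obtain ⟨h1, h2⟩ := heq
          rcases Nat.lt_trichotomy v.2.2 w.2.2 with hlt | heq2 | hgt
          · exact absurd ⟨v, hvP, h1, h2, hlt⟩ hwnc
          · exact Prod.ext h1 (Prod.ext h2 heq2)
          · exact absurd ⟨w, hwP, h1.symm, h2.symm, hgt⟩ hvnc
      rwa [Finset.card_product, Finset.card_range, Finset.card_range] at hle
    have hrowB : (P.filter (fun v =>
        ¬ ∃ w ∈ P, w.1 = v.1 ∧ w.2.2 = v.2.2 ∧ w.2.1 < v.2.1)).card ≤ k * n := by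
      have hle : (P.filter (fun v =>
          ¬ ∃ w ∈ P, w.1 = v.1 ∧ w.2.2 = v.2.2 ∧ w.2.1 < v.2.1)).card ≤
          ((Finset.range k) ×ˢ (Finset.range n)).card := by
        apply Finset.card_le_card_of_injOn (fun v => (v.1, v.2.2))
        · intro v hv
          have hb := hPbox v (Finset.mem_filter.mp hv).1
          exact Finset.mem_product.mpr ⟨Finset.mem_range.mpr hb.1,
            Finset.mem_range.mpr hb.2.2⟩
        · intro v hv w hw heq
          rcases Finset.mem_filter.mp (Finset.mem_coe.mp hv) with ⟨hvP, hvnc⟩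
          rcases Finset.mem_filter.mp (Finset.mem_coe.mp hw) with ⟨hwP, hwnc⟩
          simp only [Prod.mk.injEq] at heq
          obtain ⟨h1, h2⟩ := heq
          rcases Nat.lt_trichotomy v.2.1 w.2.1 with hlt | heq2 | hgt
          · exact absurd ⟨v, hvP, h1, h2, hlt⟩ hwnc
          · exact Prod.ext h1 (Prod.ext heq2 h2)
          · exact absurd ⟨w, hwP, h1.symm, h2.symm, hgt⟩ hvnc
      rwa [Finset.card_product, Finset.card_range, Finset.card_range] at hle
    have hNon : (P.filter (fun v => ¬ IPred v)).card ≤ k * n + k * n := by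
      have hsub : P.filter (fun v => ¬ IPred v) ⊆
          (P.filter (fun v =>
            ¬ ∃ w ∈ P, w.1 = v.1 ∧ w.2.1 = v.2.1 ∧ w.2.2 < v.2.2)) ∪
          (P.filter (fun v =>
            ¬ ∃ w ∈ P, w.1 = v.1 ∧ w.2.2 = v.2.2 ∧ w.2.1 < v.2.1)) := by
        intro v hv
        rcases Finset.mem_filter.mp hv with ⟨hvP, hvn⟩
        simp only [hIPred] at hvn
        by_cases hA : ∃ w ∈ P, w.1 = v.1 ∧ w.2.1 = v.2.1 ∧ w.2.2 < v.2.2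
        · refine Finset.mem_union_right _ (Finset.mem_filter.mpr ⟨hvP, ?_⟩)
          intro hBex
          exact hvn ⟨hA, hBex⟩
        · exact Finset.mem_union_left _ (Finset.mem_filter.mpr ⟨hvP, hA⟩)
      refine le_trans (Finset.card_le_card hsub)
        (le_trans (Finset.card_union_le _ _) (Nat.add_le_add hcolB hrowB))
    rcases Finset.eq_empty_or_nonempty (P.filter IPred) with hIe | hIne
    · rw [hIe] at hsplit
      simp only [Finset.card_empty, Nat.zero_add] at hsplit
      omega
    · obtain ⟨vs, hvs, hmax⟩ := Finset.exists_max_image (P.filter IPred)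
        (fun v => v.1) hIne
      have hvsP : vs ∈ P := (Finset.mem_filter.mp hvs).1
      have hvsI : IPred vs := (Finset.mem_filter.mp hvs).2
      simp only [hIPred] at hvsI
      have hkeyv := key vs hvsP hvsI.1 hvsI.2
      have hMlt : (P.filter (fun w => w.1 < vs.1)).card < a := by
        refine lt_of_le_of_lt (Finset.card_le_card ?_) hkeyv
        intro w hw
        rcases Finset.mem_filter.mp hw with ⟨hwP, hwlt⟩
        refine Finset.mem_filter.mpr ⟨hwP, ?_, Or.inl hwlt⟩
        intro h
        rw [h] at hwlt
        exact lt_irrefl _ hwlt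
      set Γ := (P.filter IPred).filter (fun w => w.1 = vs.1) with hΓ
      have hIsub : P.filter IPred ⊆ (P.filter (fun w => w.1 < vs.1)) ∪ Γ := by
        intro w hw
        have hwle := hmax w hw
        rcases lt_or_eq_of_le hwle with hlt | heq
        · exact Finset.mem_union_left _
            (Finset.mem_filter.mpr ⟨(Finset.mem_filter.mp hw).1, hlt⟩)
        · exact Finset.mem_union_right _ (Finset.mem_filter.mpr ⟨hw, heq⟩)
      set Qs := Γ.image (fun w => (w.2.1, w.2.2)) with hQs
      have hΓcard : Γ.card = Qs.card := by
        rw [hQs]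
        refine (Finset.card_image_of_injOn ?_).symm
        intro w hw w' hw' heq
        have h1 : w.1 = vs.1 := (Finset.mem_filter.mp (Finset.mem_coe.mp hw)).2
        have h1' : w'.1 = vs.1 := (Finset.mem_filter.mp (Finset.mem_coe.mp hw')).2
        simp only [Prod.mk.injEq] at heq
        exact Prod.ext (h1.trans h1'.symm) (Prod.ext heq.1 heq.2)
      have hQb : ∀ q ∈ Qs, q.1 < n ∧ q.2 < n := by
        intro q hq
        rw [hQs] at hq
        obtain ⟨w, hw, hweq⟩ := Finset.mem_image.mp hq
        have hwP : w ∈ P := (Finset.mem_filter.mp ((Finset.mem_filter.mp hw).1)).1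
        have hb := hPbox w hwP
        rw [← hweq]
        exact ⟨hb.2.1, hb.2.2⟩
      have hQA : ∀ p ∈ Qs, (Qs.filter (fun q => q.1 ≤ p.1 ∧ q.2 ≤ p.2)).card ≤ a := by
        intro p hp
        rw [hQs] at hp
        obtain ⟨wp, hwp, hwpeq⟩ := Finset.mem_image.mp hp
        have hwpl : wp.1 = vs.1 := (Finset.mem_filter.mp hwp).2
        have hwpI : wp ∈ P.filter IPred := (Finset.mem_filter.mp hwp).1
        have hwpP : wp ∈ P := (Finset.mem_filter.mp hwpI).1
        have hwpInt : IPred wp := (Finset.mem_filter.mp hwpI).2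
        simp only [hIPred] at hwpInt
        have hkeyp := key wp hwpP hwpInt.1 hwpInt.2
        have hp1 : wp.2.1 = p.1 := by rw [← hwpeq]
        have hp2 : wp.2.2 = p.2 := by rw [← hwpeq]
        have hsub2 : Qs.filter (fun q => q.1 ≤ p.1 ∧ q.2 ≤ p.2) ⊆
            insert p ((Bset wp).image (fun w => (w.2.1, w.2.2))) := by
          intro q hq
          rcases Finset.mem_filter.mp hq with ⟨hqQs, hq1, hq2⟩
          by_cases hqp : q = p
          · rw [hqp]
            exact Finset.mem_insert_self _ _
          · rw [hQs] at hqQs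
            obtain ⟨wq, hwq, hwqeq⟩ := Finset.mem_image.mp hqQs
            have hwql : wq.1 = vs.1 := (Finset.mem_filter.mp hwq).2
            have hwqP : wq ∈ P :=
              (Finset.mem_filter.mp ((Finset.mem_filter.mp hwq).1)).1
            have hq1' : wq.2.1 = q.1 := by rw [← hwqeq]
            have hq2' : wq.2.2 = q.2 := by rw [← hwqeq]
            refine Finset.mem_insert_of_mem (Finset.mem_image.mpr ⟨wq, ?_, hwqeq⟩)
            refine Finset.mem_filter.mpr ⟨hwqP, ?_,
              Or.inr ⟨hwql.trans hwpl.symm, ?_, ?_⟩⟩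
            · intro h
              apply hqp
              rw [← hwqeq, h, hwpeq]
            · rw [hq1', hp1]
              exact hq1
            · rw [hq2', hp2]
              exact hq2
        have hc1 := Finset.card_le_card hsub2
        have hc2 := Finset.card_insert_le p ((Bset wp).image (fun w => (w.2.1, w.2.2)))
        have hc3 := Finset.card_image_le
          (f := fun w : ℕ × ℕ × ℕ => (w.2.1, w.2.2)) (s := Bset wp)
        omega
      have hsweep := sweep_lemma hk1 hak Qs hQb hQA
      have hIcard : (P.filter IPred).card ≤ (a - 1) + 2 * (k * n) := by
        have h1 := Finset.card_le_card hIsub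
        have h2 := Finset.card_union_le (P.filter (fun w => w.1 < vs.1)) Γ
        omega
      omega
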